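/- For every finite simple graph G, ρ_T(G) = ρ_T̂(Ḡ), where Ḡ is the complement of G; equivalently, Θ̂(G) = Θ(Ḡ). -/
import Mathlib


/-- A min-plus `k`-tropical dot product representation of `G` with threshold `t`:
distinct vertices `x, y` are adjacent iff `min_{1 ≤ i ≤ k} (f(x)_i + f(y)_i) ≥ t`
(equivalently, every coordinate sum is at least `t`). -/
def MinPlusRep {V : Type*} (G : SimpleGraph V) (k : ℕ) (f : V → Fin k → ℝ) (t : ℝ) : Prop :=
  0 < t ∧ ∀ x y : V, x ≠ y → (G.Adj x y ↔ ∀ i : Fin k, t ≤ f x i + f y i)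

/-- The min-plus tropical dot product dimension `ρ_T(G)`. -/
noncomputable def rhoT {V : Type*} (G : SimpleGraph V) : ℕ :=
  sInf {k : ℕ | 0 < k ∧ ∃ (f : V → Fin k → ℝ) (t : ℝ), MinPlusRep G k f t}

/-- A max-plus `k`-tropical dot product representation of `G` with threshold `t`:
distinct vertices `x, y` are adjacent iff `max_{1 ≤ i ≤ k} (f(x)_i + f(y)_i) ≥ t`
(equivalently, some coordinate sum is at least `t`). -/
def MaxPlusRep {V : Type*} (G : SimpleGraph V) (k : ℕ) (f : V → Fin k → ℝ) (t : ℝ) : Prop :=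
  0 < t ∧ ∀ x y : V, x ≠ y → (G.Adj x y ↔ ∃ i : Fin k, t ≤ f x i + f y i)

/-- The max-plus tropical dot product dimension `ρ_T̂(G)`. -/
noncomputable def rhoTHat {V : Type*} (G : SimpleGraph V) : ℕ :=
  sInf {k : ℕ | 0 < k ∧ ∃ (f : V → Fin k → ℝ) (t : ℝ), MaxPlusRep G k f t}

/-- `G` is a threshold graph: there are vertex weights `w` and a threshold `t` such that
distinct vertices are adjacent iff the sum of their weights is at least `t`. -/
def IsThresholdGraph {V : Type*} (G : SimpleGraph V) : Prop :=
  ∃ (w : V → ℝ) (t : ℝ), ∀ x y : V, x ≠ y → (G.Adj x y ↔ t ≤ w x + w y)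

/-- The threshold dimension `Θ(G)`: the minimum number `k` of threshold graphs on the
vertex set of `G` whose union (of edge sets) is `G`. -/
noncomputable def thresholdDim {V : Type*} (G : SimpleGraph V) : ℕ :=
  sInf {k : ℕ | 0 < k ∧ ∃ H : Fin k → SimpleGraph V,
    (∀ i, IsThresholdGraph (H i)) ∧ (⨆ i, H i) = G}

/-- The threshold graph intersection number `Θ̂(G)`: the minimum number `k` of threshold
graphs on the vertex set of `G` whose intersection (of edge sets) is `G`. -/
noncomputable def thresholdIntDim {V : Type*} (G : SimpleGraph V) : ℕ :=
  sInf {k : ℕ | 0 < k ∧ ∃ H : Fin k → SimpleGraph V,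
    (∀ i, IsThresholdGraph (H i)) ∧ (⨅ i, H i) = G}

/-- `ρ_T(G) = ρ_T̂(Ḡ)`; equivalently `Θ̂(G) = Θ(Ḡ)`. -/
lemma eps_lemma {α : Type*} [Fintype α] (s : α → ℝ) (t : ℝ) :
    ∃ ε > (0:ℝ), ∀ a, (s a < t ↔ s a ≤ t - ε) := by
  classical
  by_cases h : ∃ a, s a < t
  · obtain ⟨a0, ha0⟩ := h
    have hne : (Finset.univ.filter (fun a => s a < t)).Nonempty := ⟨a0, by simp [ha0]⟩
    have hmt : (Finset.univ.filter (fun a => s a < t)).sup' hne s < t := by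
      rw [Finset.sup'_lt_iff]
      intro a ha; exact (Finset.mem_filter.mp ha).2
    refine ⟨t - (Finset.univ.filter (fun a => s a < t)).sup' hne s, by linarith,
      fun a => ⟨fun hlt => ?_, fun hle => by linarith⟩⟩
    have : s a ≤ (Finset.univ.filter (fun a => s a < t)).sup' hne s :=
      Finset.le_sup' s (by simp [hlt])
    linarith
  · push_neg at h
    exact ⟨1, one_pos, fun a => ⟨fun hlt => absurd hlt (not_lt.mpr (h a)),
      fun hle => by linarith [h a]⟩⟩

lemma minToMax {V : Type*} [Fintype V] {G : SimpleGraph V} {k : ℕ} {f : V → Fin k → ℝ} {t : ℝ}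
    (h : MinPlusRep G k f t) : ∃ g t', MaxPlusRep Gᶜ k g t' := by
  obtain ⟨ht, hadj⟩ := h
  obtain ⟨ε, hε, hiff⟩ := eps_lemma (fun p : V × V × Fin k => f p.1 p.2.2 + f p.2.1 p.2.2) t
  refine ⟨fun v i => t - f v i, t + ε, by linarith, fun x y hxy => ?_⟩
  rw [SimpleGraph.compl_adj]
  constructor
  · rintro ⟨-, hna⟩
    rw [hadj x y hxy] at hna
    push_neg at hna
    obtain ⟨i, hi⟩ := hna
    have := (hiff (x, y, i)).mp hi
    refine ⟨i, ?_⟩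
    show t + ε ≤ (t - f x i) + (t - f y i)
    linarith
  · rintro ⟨i, hi⟩
    refine ⟨hxy, ?_⟩
    rw [hadj x y hxy]
    push_neg
    have hi' : t + ε ≤ (t - f x i) + (t - f y i) := hi
    have := (hiff (x, y, i)).mpr (by simp only; linarith)
    exact ⟨i, by linarith⟩

lemma maxToMin {V : Type*} [Fintype V] {G : SimpleGraph V} {k : ℕ} {f : V → Fin k → ℝ} {t : ℝ}
    (h : MaxPlusRep G k f t) : ∃ g t', MinPlusRep Gᶜ k g t' := by
  obtain ⟨ht, hadj⟩ := h
  obtain ⟨ε, hε, hiff⟩ := eps_lemma (fun p : V × V × Fin k => f p.1 p.2.2 + f p.2.1 p.2.2) t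
  refine ⟨fun v i => t - f v i, t + ε, by linarith, fun x y hxy => ?_⟩
  rw [SimpleGraph.compl_adj]
  constructor
  · rintro ⟨-, hna⟩
    rw [hadj x y hxy] at hna
    push_neg at hna
    intro i
    have := (hiff (x, y, i)).mp (hna i)
    show t + ε ≤ (t - f x i) + (t - f y i)
    simp only at this; linarith
  · intro hall
    refine ⟨hxy, ?_⟩
    rw [hadj x y hxy]
    rintro ⟨i, hi⟩
    have h2 : t + ε ≤ (t - f x i) + (t - f y i) := hall i
    have := (hiff (x, y, i)).mpr (by simp only; linarith)
    linarith

lemma complThreshold {V : Type*} [Fintype V] {H : SimpleGraph V} (h : IsThresholdGraph H) :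
    IsThresholdGraph Hᶜ := by
  obtain ⟨w, t, hw⟩ := h
  obtain ⟨ε, hε, hiff⟩ := eps_lemma (fun p : V × V => w p.1 + w p.2) t
  refine ⟨fun v => -w v, ε - t, fun x y hxy => ?_⟩
  rw [SimpleGraph.compl_adj]
  have h1 := hw x y hxy
  have h2 := hiff (x, y)
  simp only at h2
  constructor
  · rintro ⟨-, hna⟩
    rw [h1] at hna
    push_neg at hna
    have := h2.mp hna
    show ε - t ≤ -w x + -w y
    linarith
  · intro hle
    refine ⟨hxy, ?_⟩
    rw [h1]
    intro hge
    have hle' : ε - t ≤ -w x + -w y := hle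
    have := h2.mpr (by linarith)
    linarith

theorem stmt_9 {V : Type*} [Fintype V] (G : SimpleGraph V) :
    rhoT G = rhoTHat Gᶜ ∧ thresholdIntDim G = thresholdDim Gᶜ := by
  constructor
  · unfold rhoT rhoTHat
    congr 1
    ext k
    constructor
    · rintro ⟨hk, f, t, h⟩
      obtain ⟨g, t', h'⟩ := minToMax h
      exact ⟨hk, g, t', h'⟩
    · rintro ⟨hk, f, t, h⟩
      obtain ⟨g, t', h'⟩ := maxToMin h
      rw [compl_compl] at h'
      exact ⟨hk, g, t', h'⟩
  · unfold thresholdIntDim thresholdDim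
    congr 1
    ext k
    constructor
    · rintro ⟨hk, H, hth, hG⟩
      refine ⟨hk, fun i => (H i)ᶜ, fun i => complThreshold (hth i), ?_⟩
      rw [← compl_iInf, hG]
    · rintro ⟨hk, H, hth, hG⟩
      refine ⟨hk, fun i => (H i)ᶜ, fun i => complThreshold (hth i), ?_⟩
      rw [← compl_iSup, hG, compl_compl]
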